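/- Let γ = (x₁, y₁, x₂) : J → ℝ³ be a differentiable solution on an interval J of the system x₁' = y₁, y₁' = −x₁y₁²/x₂², x₂' = −x₁y₁/x₂, where x₂(t) ≠ 0 for all t ∈ J. Then the functions t ↦ x₁(t)² + x₂(t)² and t ↦ y₁(t)/x₂(t) are constant on J. -/

import Mathlib

/-- Along any solution of the restricted system `x₁' = y₁`, `y₁' = −x₁y₁²/x₂²`,
`x₂' = −x₁y₁/x₂` on an interval `J` with `x₂ ≠ 0` on `J`, the quantities
`x₁² + x₂²` and `y₁/x₂` are constant. -/
theorem restricted_system_conserved (J : Set ℝ) (hJ : J.OrdConnected)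
    (x1 y1 x2 : ℝ → ℝ)
    (hx2ne : ∀ t ∈ J, x2 t ≠ 0)
    (h1 : ∀ t ∈ J, HasDerivWithinAt x1 (y1 t) J t)
    (h2 : ∀ t ∈ J, HasDerivWithinAt y1 (-(x1 t * (y1 t) ^ 2) / (x2 t) ^ 2) J t)
    (h3 : ∀ t ∈ J, HasDerivWithinAt x2 (-(x1 t * y1 t) / x2 t) J t) :
    ∀ t ∈ J, ∀ s ∈ J,
      (x1 t) ^ 2 + (x2 t) ^ 2 = (x1 s) ^ 2 + (x2 s) ^ 2 ∧
      y1 t / x2 t = y1 s / x2 s := by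
  have hconv : Convex ℝ J := convex_iff_ordConnected.mpr hJ
  have hF : ∀ u ∈ J, HasDerivWithinAt (fun t => (x1 t) ^ 2 + (x2 t) ^ 2)
      ((0 : ℝ)) J u := by
    intro u hu
    have : HasDerivWithinAt (fun t => (x1 t) ^ 2 + (x2 t) ^ 2) _ J u := (((h1 u hu).pow 2).add ((h3 u hu).pow 2))
    convert this using 1
    have hx := hx2ne u hu
    field_simp
    ring
  have hG : ∀ u ∈ J, HasDerivWithinAt (fun t => y1 t / x2 t) ((0 : ℝ)) J u := by
    intro u hu
    have hx := hx2ne u hu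
    have : HasDerivWithinAt (fun t => y1 t / x2 t) _ J u := (h2 u hu).div (h3 u hu) hx
    convert this using 1
    field_simp
    ring
  intro t ht s hs
  constructor
  · have := hconv.norm_image_sub_le_of_norm_hasDerivWithin_le
      (f := fun t => (x1 t) ^ 2 + (x2 t) ^ 2) (C := 0) (f' := fun _ => 0)
      hF (fun x _ => by simp) hs ht
    simpa [sub_eq_zero] using this
  · have := hconv.norm_image_sub_le_of_norm_hasDerivWithin_le
      (f := fun t => y1 t / x2 t) (C := 0) (f' := fun _ => 0)
      hG (fun x _ => by simp) hs ht
    simpa [sub_eq_zero] using this
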